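/- Let k be a field of characteristic p and λ = rp + a with 0 ≤ a < p and a + 1 ≢ 0 mod p. Let C(λ) ∈ M_{λ+1}(k[s,t]) be the tridiagonal matrix with rows and columns indexed 0,…,λ whose (i,j) entry is (i − λ − 1)·t² if i = j+1, (λ − 2i)·st if i = j, (i + 1)·s² if i = j−1, and 0 otherwise. Then the kernel of C(λ) is a free k[s,t]-module of rank r + 1 with all basis elements homogeneous of degree a; the basis element H_q (0 ≤ q ≤ r) has i-th coordinate (−1)^b·C(λ, b)·s^{a−b}·t^b when i = qp + b with 0 ≤ b ≤ a, and 0 otherwise. -/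

import Mathlib

open MvPolynomial

/-- The tridiagonal matrix `C(λ)` over `k[s,t]` (with `s = X 0`, `t = X 1`):
`(i,j)` entry is `(i−λ−1)·t²` if `i = j+1`, `(λ−2i)·st` if `i = j`, `(i+1)·s²` if `i = j−1`. -/
noncomputable def Cmat (k : Type*) [Field k] (l : ℕ) :
    Matrix (Fin (l + 1)) (Fin (l + 1)) (MvPolynomial (Fin 2) k) :=
  Matrix.of fun i j =>
    if (i : ℕ) = (j : ℕ) + 1 then
      ((((i : ℕ) : ℤ) - (l : ℤ) - 1 : ℤ) : MvPolynomial (Fin 2) k) * X 1 ^ 2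
    else if (i : ℕ) = (j : ℕ) then
      (((l : ℤ) - 2 * (i : ℕ) : ℤ) : MvPolynomial (Fin 2) k) * (X 0 * X 1)
    else if (j : ℕ) = (i : ℕ) + 1 then
      (((i : ℕ) + 1 : ℕ) : MvPolynomial (Fin 2) k) * X 0 ^ 2
    else 0

/-- The vector `H_q ∈ k[s,t]^{λ+1}` with `i`-th coordinate
`(−1)^b·C(λ,b)·s^{a−b}·t^b` when `i = qp + b`, `0 ≤ b ≤ a`, and `0` otherwise. -/
noncomputable def Hvec (k : Type*) [Field k] (p a l q : ℕ) :
    Fin (l + 1) → MvPolynomial (Fin 2) k :=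
  fun i =>
    if q * p ≤ (i : ℕ) ∧ (i : ℕ) ≤ q * p + a then
      (-1 : MvPolynomial (Fin 2) k) ^ ((i : ℕ) - q * p)
        * ((l.choose ((i : ℕ) - q * p) : ℕ) : MvPolynomial (Fin 2) k)
        * X 0 ^ (a - ((i : ℕ) - q * p)) * X 1 ^ ((i : ℕ) - q * p)
    else 0

section Aux

variable {k : Type*} [Field k] {l : ℕ}

/-- extension of a vector to `ℤ`, zero outside `[0,l]`. -/
noncomputable def extv (l : ℕ) (v : Fin (l + 1) → MvPolynomial (Fin 2) k) :
    ℤ → MvPolynomial (Fin 2) k :=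
  fun n => if h : 0 ≤ n ∧ n ≤ l then v ⟨n.toNat, by omega⟩ else 0

lemma extv_eq (v : Fin (l + 1) → MvPolynomial (Fin 2) k) {n : ℤ} (h0 : 0 ≤ n) (h1 : n ≤ l) :
    extv l v n = v ⟨n.toNat, by omega⟩ := dif_pos ⟨h0, h1⟩

lemma extv_coe (v : Fin (l + 1) → MvPolynomial (Fin 2) k) (i : Fin (l + 1)) :
    extv l v (i : ℕ) = v i := by
  rw [extv_eq v (by positivity) (by exact_mod_cast Nat.lt_succ_iff.mp i.2)]
  exact congrArg v (by ext; simp)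

lemma extv_zero (v : Fin (l + 1) → MvPolynomial (Fin 2) k) {n : ℤ} (h : n < 0 ∨ (l : ℤ) < n) :
    extv l v n = 0 := dif_neg (by omega)

lemma sum_ite_nat (m : ℕ) (f : Fin (l + 1) → MvPolynomial (Fin 2) k) :
    ∑ j : Fin (l + 1), (if (j : ℕ) = m then f j else 0)
      = if h : m < l + 1 then f ⟨m, h⟩ else 0 := by
  split
  · next h =>
    rw [Finset.sum_eq_single ⟨m, h⟩]
    · simp
    · intro j _ hne
      rw [if_neg]
      intro hc
      exact hne (Fin.ext hc)
    · simp
  · next h =>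
    apply Finset.sum_eq_zero
    intro j _
    rw [if_neg]
    omega

/-- the three-term row formula for `mulVec`. -/
lemma mulVec_row (v : Fin (l + 1) → MvPolynomial (Fin 2) k) (i : Fin (l + 1)) :
    (Cmat k l).mulVec v i
      = ((((i : ℕ) : ℤ) - l - 1 : ℤ) : MvPolynomial (Fin 2) k) * X 1 ^ 2
          * extv l v ((i : ℕ) - 1)
        + (((l : ℤ) - 2 * ((i : ℕ) : ℤ) : ℤ) : MvPolynomial (Fin 2) k) * (X 0 * X 1)
          * extv l v ((i : ℕ))
        + ((((i : ℕ) : ℤ) + 1 : ℤ) : MvPolynomial (Fin 2) k) * X 0 ^ 2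
          * extv l v ((i : ℕ) + 1) := by
  have hsum : (Cmat k l).mulVec v i
      = ∑ j : Fin (l + 1),
          ((if (j : ℕ) = (i : ℕ) - 1 ∧ 1 ≤ (i : ℕ) then
              ((((i : ℕ) : ℤ) - (l : ℤ) - 1 : ℤ) : MvPolynomial (Fin 2) k) * X 1 ^ 2 * v j else 0)
           + (if (j : ℕ) = (i : ℕ) then
              (((l : ℤ) - 2 * (i : ℕ) : ℤ) : MvPolynomial (Fin 2) k) * (X 0 * X 1) * v j else 0)
           + (if (j : ℕ) = (i : ℕ) + 1 then
              (((i : ℕ) + 1 : ℕ) : MvPolynomial (Fin 2) k) * X 0 ^ 2 * v j else 0)) := by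
    rw [Matrix.mulVec]
    apply Finset.sum_congr rfl
    intro j _
    simp only [dotProduct, Cmat, Matrix.of_apply]
    split_ifs <;> first | omega | ring
  rw [hsum, Finset.sum_add_distrib, Finset.sum_add_distrib]
  congr 1
  · congr 1
    · -- subdiagonal term
      by_cases hi : 1 ≤ (i : ℕ)
      · have hcong : ∀ j : Fin (l + 1),
            (if (j : ℕ) = (i : ℕ) - 1 ∧ 1 ≤ (i : ℕ) then
              ((((i : ℕ) : ℤ) - (l : ℤ) - 1 : ℤ) : MvPolynomial (Fin 2) k) * X 1 ^ 2 * v j else 0)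
            = (if (j : ℕ) = (i : ℕ) - 1 then
              ((((i : ℕ) : ℤ) - (l : ℤ) - 1 : ℤ) : MvPolynomial (Fin 2) k) * X 1 ^ 2 * v j else 0) := by
          intro j; simp [hi]
        rw [Finset.sum_congr rfl (fun j _ => hcong j), sum_ite_nat, dif_pos (by omega)]
        rw [extv_eq v (by omega) (by have := i.2; omega)]
        exact congrArg _ (congrArg v (by ext; simp))
      · have h0 : (i : ℕ) = 0 := by omega
        rw [Finset.sum_eq_zero (fun j _ => by rw [if_neg]; omega)]
        rw [extv_zero v (by omega), mul_zero]
    · -- diagonal term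
      rw [sum_ite_nat, dif_pos i.2, ← extv_coe v i]
  · -- superdiagonal term
    by_cases hi : (i : ℕ) < l
    · rw [sum_ite_nat, dif_pos (by omega)]
      rw [extv_eq v (by omega) (by push_cast; omega)]
      have hv : v ⟨(i : ℕ) + 1, by omega⟩ = v ⟨(((i : ℕ) : ℤ) + 1).toNat, by omega⟩ :=
        congrArg v (by ext; simp)
      rw [← hv]
      push_cast
      ring
    · rw [sum_ite_nat, dif_neg (by have := i.2; omega)]
      rw [extv_zero v (by have := i.2; omega), mul_zero]

end Aux

/-- row equation predicate -/
def RowEq {k : Type*} [Field k] (l : ℕ) (w : ℤ → MvPolynomial (Fin 2) k) : Prop :=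
  ∀ n : ℤ, ((n - l - 1 : ℤ) : MvPolynomial (Fin 2) k) * X 1 ^ 2 * w (n - 1)
    + (((l : ℤ) - 2 * n : ℤ) : MvPolynomial (Fin 2) k) * (X 0 * X 1) * w n
    + ((n + 1 : ℤ) : MvPolynomial (Fin 2) k) * X 0 ^ 2 * w (n + 1) = 0

section Aux2

variable {k : Type*} [Field k] {l : ℕ}

lemma mem_ker_iff (v : Fin (l + 1) → MvPolynomial (Fin 2) k) :
    v ∈ LinearMap.ker (Cmat k l).mulVecLin ↔ RowEq l (extv l v) := by
  rw [LinearMap.mem_ker, Matrix.mulVecLin_apply]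
  constructor
  · intro hv n
    by_cases hn : 0 ≤ n ∧ n ≤ l
    · -- use the row at index n.toNat
      have hfi : n.toNat < l + 1 := by omega
      have h := congrFun hv ⟨n.toNat, hfi⟩
      rw [mulVec_row] at h
      have hco : ((⟨n.toNat, hfi⟩ : Fin (l + 1)) : ℕ) = n.toNat := rfl
      rw [hco] at h
      have h1 : ((n.toNat : ℤ)) = n := by omega
      rw [h1] at h
      exact h
    · -- outside the range
      rcases (by omega : n = -1 ∨ n = (l : ℤ) + 1 ∨ (n + 1 < 0 ∨ (l : ℤ) < n - 1)) with h | h | h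
      · subst h
        rw [extv_zero v (n := -1 - 1) (by omega), extv_zero v (n := -1) (by omega)]
        norm_num
      · subst h
        rw [extv_zero v (n := (l : ℤ) + 1) (by omega),
          extv_zero v (n := (l : ℤ) + 1 + 1) (by omega)]
        have hc : (((l : ℤ) + 1 - l - 1 : ℤ) : MvPolynomial (Fin 2) k) = 0 := by norm_num
        rw [hc]
        ring
      · rw [extv_zero v (n := n - 1) (by omega), extv_zero v (n := n) (by omega),
          extv_zero v (n := n + 1) (by omega)]
        ring
  · intro hr
    funext i
    rw [mulVec_row, Pi.zero_apply]
    have h := hr ((i : ℕ) : ℤ)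
    push_cast at h ⊢
    convert h using 3 <;> push_cast <;> ring
end Aux2

/-- signed binomial coefficients, as integers, cut off outside `[0,a]`. -/
def esgn (a l : ℕ) : ℤ → ℤ := fun j =>
  if 0 ≤ j ∧ j ≤ (a : ℤ) then (-1) ^ j.toNat * (l.choose j.toNat : ℤ) else 0

/-- the coefficients in `R = k[s,t]`. -/
noncomputable def cf (k : Type*) [Field k] (a l : ℕ) : ℤ → MvPolynomial (Fin 2) k :=
  fun j => ((esgn a l j : ℤ) : MvPolynomial (Fin 2) k)

lemma esgn_zero (a l : ℕ) {j : ℤ} (h : j < 0 ∨ (a : ℤ) < j) : esgn a l j = 0 :=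
  if_neg (by omega)

lemma cf_zero (k : Type*) [Field k] (a l : ℕ) {j : ℤ} (h : j < 0 ∨ (a : ℤ) < j) :
    cf k a l j = 0 := by
  rw [cf, esgn_zero a l h]; norm_num

lemma cf_nat (k : Type*) [Field k] (a l : ℕ) {b : ℕ} (h : b ≤ a) :
    cf k a l (b : ℤ) = (-1 : MvPolynomial (Fin 2) k) ^ b * (l.choose b : ℕ) := by
  rw [cf, esgn, if_pos (by omega)]
  push_cast
  simp

section Key

variable {p r a l : ℕ} (hp : p.Prime) (ha : a < p) (hl : l = r * p + a)

/-- the fundamental recursion for `esgn`, in `ZMod p`. -/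
lemma esgn_rec (hl : l = r * p + a) (j : ℕ) (hj : 1 ≤ j) (hj2 : j ≤ a + 1) :
    ((j : ℕ) : ZMod p) * ((esgn a l (j : ℤ) : ℤ) : ZMod p)
      = -(((a : ZMod p) + 1 - j)) * ((esgn a l ((j : ℤ) - 1) : ℤ) : ZMod p) := by
  rcases Nat.lt_or_ge a j with hja | hja
  · -- j = a + 1
    have hje : j = a + 1 := by omega
    subst hje
    rw [esgn_zero a l (by push_cast; omega : ((a + 1 : ℕ) : ℤ) < 0 ∨ (a : ℤ) < ((a + 1 : ℕ) : ℤ))]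
    push_cast
    ring
  · -- 1 ≤ j ≤ a
    rw [esgn, esgn, if_pos (by omega : (0 : ℤ) ≤ (j : ℤ) ∧ (j : ℤ) ≤ (a : ℤ)),
      if_pos (by omega : (0 : ℤ) ≤ (j : ℤ) - 1 ∧ (j : ℤ) - 1 ≤ (a : ℤ))]
    have ht1 : ((j : ℤ)).toNat = j := by omega
    have ht2 : ((j : ℤ) - 1).toNat = j - 1 := by omega
    rw [ht1, ht2]
    have hcho := Nat.choose_succ_right_eq l (j - 1)
    rw [show j - 1 + 1 = j from by omega] at hcho
    have hsub : l - (j - 1) = l + 1 - j := by omega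
    rw [hsub] at hcho
    have hcast : ((l.choose j * j : ℕ) : ZMod p) = ((l.choose (j - 1) * (l + 1 - j) : ℕ) : ZMod p) := by
      rw [hcho]
    have hle : j ≤ l + 1 := by omega
    rw [Nat.cast_mul, Nat.cast_mul, Nat.cast_sub hle] at hcast
    push_cast at hcast
    have hlz : ((l : ℕ) : ZMod p) = (a : ZMod p) := by
      rw [hl]; push_cast [ZMod.natCast_self]; ring
    rw [hlz] at hcast
    push_cast at hcast
    have hsgn : ((-1 : ZMod p)) ^ j = -((-1 : ZMod p) ^ (j - 1)) := by
      conv_lhs => rw [show j = (j - 1) + 1 from by omega]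
      rw [pow_succ]
      ring
    push_cast
    rw [hsgn]
    calc (j : ZMod p) * (-(-1 : ZMod p) ^ (j - 1) * (l.choose j : ℕ))
        = -((-1 : ZMod p) ^ (j - 1)) * ((l.choose j : ℕ) * j) := by ring
      _ = -((-1 : ZMod p) ^ (j - 1)) * ((l.choose (j-1) : ℕ) * ((a : ZMod p) + 1 - j)) := by
          rw [hcast]
      _ = -((a : ZMod p) + 1 - j) * ((-1 : ZMod p) ^ (j - 1) * (l.choose (j-1) : ℕ)) := by ring

end Key

section Key2

variable {k : Type*} [Field k] {p r a l : ℕ}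

/-- the key three-term identity, as divisibility in `ℤ`. -/
lemma keyZ (hp : p.Prime) (hl : l = r * p + a) {b : ℕ} (hb : b ≤ a) {n : ℤ}
    (hn : (p : ℤ) ∣ (n - b)) :
    (p : ℤ) ∣ ((n - l - 1) * esgn a l ((b : ℤ) - 1) + ((l : ℤ) - 2 * n) * esgn a l (b : ℤ)
      + (n + 1) * esgn a l ((b : ℤ) + 1)) := by
  haveI : Fact p.Prime := ⟨hp⟩
  rw [← ZMod.intCast_zmod_eq_zero_iff_dvd]
  have hnb : ((n : ℤ) : ZMod p) = ((b : ℕ) : ZMod p) := by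
    have : (((n - b : ℤ)) : ZMod p) = 0 := by
      rw [ZMod.intCast_zmod_eq_zero_iff_dvd]; exact_mod_cast hn
    push_cast at this ⊢
    linear_combination this
  have hlz : ((l : ℕ) : ZMod p) = (a : ZMod p) := by
    rw [hl]; push_cast [ZMod.natCast_self]; ring
  have h3 := esgn_rec (p := p) (r := r) hl (b + 1) (by omega) (by omega)
  rw [show (((b + 1 : ℕ) : ℤ)) = (b : ℤ) + 1 from by push_cast; ring] at h3
  rw [show ((b : ℤ) + 1 - 1) = (b : ℤ) from by ring] at h3
  push_cast at h3 ⊢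
  rw [hnb, hlz]
  rcases Nat.eq_zero_or_pos b with hb0 | hb0
  · subst hb0
    have h1 : ((esgn a l (-1 : ℤ) : ℤ) : ZMod p) = 0 := by
      rw [esgn_zero a l (by omega)]; norm_num
    norm_num at h3 ⊢
    linear_combination h3 - ((a : ZMod p) + 1) * h1
  · have h2 := esgn_rec (p := p) (r := r) hl b (by omega) (by omega)
    push_cast at h2
    linear_combination h3 - h2

/-- the key three-term identity in `k[s,t]`. -/
lemma keyR (hp : p.Prime) [CharP k p] (hl : l = r * p + a) {b : ℕ} (hb : b ≤ a) {n : ℤ}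
    (hn : (p : ℤ) ∣ (n - b)) :
    ((n - l - 1 : ℤ) : MvPolynomial (Fin 2) k) * cf k a l ((b : ℤ) - 1)
      + (((l : ℤ) - 2 * n : ℤ) : MvPolynomial (Fin 2) k) * cf k a l (b : ℤ)
      + ((n + 1 : ℤ) : MvPolynomial (Fin 2) k) * cf k a l ((b : ℤ) + 1) = 0 := by
  obtain ⟨c, hc⟩ := keyZ hp hl hb hn
  have : (((n - l - 1) * esgn a l ((b : ℤ) - 1) + ((l : ℤ) - 2 * n) * esgn a l (b : ℤ)
      + (n + 1) * esgn a l ((b : ℤ) + 1) : ℤ) : MvPolynomial (Fin 2) k) = 0 := by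
    rw [hc]
    push_cast
    simp [CharP.cast_eq_zero]
  push_cast at this
  unfold cf
  push_cast
  linear_combination this

end Key2

noncomputable def Hext (k : Type*) [Field k] (p a l q : ℕ) : ℤ → MvPolynomial (Fin 2) k :=
  fun n => cf k a l (n - ((q * p : ℕ) : ℤ)) * X 0 ^ (a - (n - ((q * p : ℕ) : ℤ)).toNat)
    * X 1 ^ ((n - ((q * p : ℕ) : ℤ)).toNat)

section Mem

variable {k : Type*} [Field k] {p r a l : ℕ}

lemma castp [CharP k p] {x : ℤ} (h : (p : ℤ) ∣ x) :
    ((x : ℤ) : MvPolynomial (Fin 2) k) = 0 := by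
  obtain ⟨c, hc⟩ := h
  rw [hc]
  push_cast
  simp [CharP.cast_eq_zero]

lemma extv_Hvec (hl : l = r * p + a) {q : ℕ} (hq : q ≤ r) :
    extv l (Hvec k p a l q) = Hext k p a l q := by
  have hqr : q * p ≤ r * p := Nat.mul_le_mul_right p hq
  funext n
  by_cases hn : 0 ≤ n ∧ n ≤ l
  · rw [extv_eq _ hn.1 hn.2, Hvec]
    by_cases hw : q * p ≤ n.toNat ∧ n.toNat ≤ q * p + a
    · rw [if_pos]
      · set b : ℕ := n.toNat - q * p with hb
        rw [Hext, show n - ((q * p : ℕ) : ℤ) = ((b : ℕ) : ℤ) from by omega,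
          cf_nat k a l (by omega : b ≤ a)]
        simp
      · exact_mod_cast hw
    · rw [if_neg, Hext, cf_zero k a l (by omega : n - ((q * p : ℕ) : ℤ) < 0 ∨ _)]
      · ring
      · exact_mod_cast hw
  · rw [extv_zero _ (by omega), Hext, cf_zero k a l (by omega : _ ∨ (a : ℤ) < n - ((q * p : ℕ) : ℤ))]
    ring

lemma Hext_rowEq (hp : p.Prime) [CharP k p] (ha1 : a + 1 < p) (hl : l = r * p + a) (q : ℕ) :
    RowEq l (Hext k p a l q) := by
  intro n
  simp only [Hext]
  have hlz : (l : ℤ) = (r : ℤ) * p + a := by push_cast [hl]; ring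
  generalize hgen : ((q * p : ℕ) : ℤ) = m
  have hpm : (p : ℤ) ∣ m := by rw [← hgen]; exact ⟨q, by push_cast; ring⟩
  have hrp : (p : ℤ) ∣ ((r : ℤ) * p) := ⟨r, by ring⟩
  rcases lt_trichotomy (n - m) (-1) with hcase | hcase | hcase
  · rw [cf_zero k a l (by omega), cf_zero k a l (by omega), cf_zero k a l (by omega)]
    ring
  · -- n = m - 1 : only the superdiagonal term, with vanishing coefficient
    rw [cf_zero k a l (by omega : n - 1 - m < 0 ∨ _), cf_zero k a l (by omega : n - m < 0 ∨ _)]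
    have hz : ((n + 1 : ℤ) : MvPolynomial (Fin 2) k) = 0 := by
      apply castp (p := p)
      rw [show n + 1 = m from by omega]
      exact hpm
    rw [hz]
    ring
  · rcases lt_trichotomy (n - m) ((a : ℤ) + 1) with hcase2 | hcase2 | hcase2
    · -- the window case : 0 ≤ n - m ≤ a
      obtain ⟨b, hnb⟩ : ∃ b : ℕ, n - m = (b : ℤ) := ⟨(n - m).toNat, by omega⟩
      have hba : b ≤ a := by omega
      have hdvd : (p : ℤ) ∣ n - (b : ℤ) := by
        rw [show n - (b : ℤ) = m from by omega]; exact hpm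
      have hkey := keyR (k := k) hp hl hba hdvd
      rw [show n - 1 - m = (b : ℤ) - 1 from by omega, show n + 1 - m = (b : ℤ) + 1 from by omega,
        hnb]
      rw [show ((b : ℕ) : ℤ).toNat = b from by omega,
        show (((b : ℕ) : ℤ) - 1).toNat = b - 1 from by omega,
        show (((b : ℕ) : ℤ) + 1).toNat = b + 1 from by omega]
      rcases Nat.eq_zero_or_pos b with hb0 | hb0
      · subst hb0
        -- b = 0
        rw [cf_zero k a l (by norm_num : ((0:ℕ) : ℤ) - 1 < 0 ∨ _)] at hkey ⊢
        rcases Nat.eq_zero_or_pos a with ha0 | ha0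
        · -- a = 0 : both remaining terms vanish
          rw [cf_zero k a l (by push_cast; omega : _ ∨ (a:ℤ) < ((0:ℕ):ℤ) + 1)]
          have hz : (((l : ℤ) - 2 * n : ℤ) : MvPolynomial (Fin 2) k) = 0 := by
            apply castp (p := p)
            rw [show (l : ℤ) - 2 * n = (r : ℤ) * p - 2 * m from by omega]
            exact dvd_sub hrp (Dvd.dvd.mul_left hpm 2)
          rw [hz]
          ring
        · obtain ⟨a', rfl⟩ : ∃ a', a = a' + 1 := ⟨a - 1, by omega⟩
          simp only [Nat.add_sub_cancel, Nat.sub_zero, Nat.zero_sub]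
          linear_combination (X 0 ^ (a' + 2) * X 1 : MvPolynomial (Fin 2) k) * hkey
      · obtain ⟨b', rfl⟩ : ∃ b', b = b' + 1 := ⟨b - 1, by omega⟩
        obtain ⟨c, hc⟩ : ∃ c, a = b' + 1 + c := ⟨a - (b' + 1), by omega⟩
        subst hc
        simp only [Nat.add_sub_cancel, Nat.succ_sub_one]
        rw [show b' + 1 + c - b' = c + 1 from by omega]
        rcases Nat.eq_zero_or_pos c with hc0 | hc0
        · subst hc0
          -- b = a : last cf vanishes
          rw [cf_zero k (b' + 1 + 0) l (by push_cast; omega : _ ∨ ((b' + 1 + 0 : ℕ) : ℤ) < ((b' + 1 : ℕ) : ℤ) + 1)] at hkey ⊢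
          rw [show b' + 1 + 0 - (b' + 1) = 0 from by omega]
          linear_combination (X 0 * X 1 ^ (b' + 2) : MvPolynomial (Fin 2) k) * hkey
        · obtain ⟨c', rfl⟩ : ∃ c', c = c' + 1 := ⟨c - 1, by omega⟩
          rw [show b' + 1 + (c' + 1) - (b' + 1) = c' + 1 from by omega,
            show b' + 1 + (c' + 1) - (b' + 1 + 1) = c' from by omega]
          linear_combination (X 0 ^ (c' + 2) * X 1 ^ (b' + 2) : MvPolynomial (Fin 2) k) * hkey
    · -- n = m + a + 1 : only subdiagonal term, vanishing coefficient
      rw [cf_zero k a l (by omega : _ ∨ (a : ℤ) < n - m), cf_zero k a l (by omega : _ ∨ (a : ℤ) < n + 1 - m)]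
      have hz : ((n - l - 1 : ℤ) : MvPolynomial (Fin 2) k) = 0 := by
        apply castp (p := p)
        rw [show n - l - 1 = m - (r : ℤ) * p from by omega]
        exact dvd_sub hpm hrp
      rw [hz]
      ring
    · -- far above
      rw [cf_zero k a l (by omega : _ ∨ (a : ℤ) < n - 1 - m), cf_zero k a l (by omega : _ ∨ (a : ℤ) < n - m),
        cf_zero k a l (by omega : _ ∨ (a : ℤ) < n + 1 - m)]
      ring

lemma Hvec_mem_ker (hp : p.Prime) [CharP k p] (ha1 : a + 1 < p) (hl : l = r * p + a)
    {q : ℕ} (hq : q ≤ r) :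
    Hvec k p a l q ∈ LinearMap.ker (Cmat k l).mulVecLin := by
  rw [mem_ker_iff, extv_Hvec hl hq]
  exact Hext_rowEq hp ha1 hl q

end Mem

section Struct

variable {k : Type*} [Field k] {p r a l : ℕ}

lemma cast_ne [CharP k p] {x : ℤ} (h : ¬ (p : ℤ) ∣ x) :
    ((x : ℤ) : MvPolynomial (Fin 2) k) ≠ 0 := by
  intro h0
  rw [CharP.intCast_eq_zero_iff (MvPolynomial (Fin 2) k) p] at h0
  exact h h0

lemma not_dvd_aux {p q b N : ℕ} (hN : N = q * p + b) (h1 : 0 < b) (h2 : b < p) :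
    ¬ (p : ℤ) ∣ (N : ℤ) := by
  rw [Int.natCast_dvd_natCast]
  intro h
  have hqp : p ∣ q * p := ⟨q, mul_comm q p⟩
  have hd := Nat.dvd_sub h hqp
  rw [show N - q * p = b from by omega] at hd
  have := Nat.le_of_dvd h1 hd
  omega

lemma structure_lem (hp : p.Prime) [CharP k p] (ha1 : a + 1 < p) (hl : l = r * p + a)
    (v : Fin (l + 1) → MvPolynomial (Fin 2) k) (hv : RowEq l (extv l v)) :
    ∀ N : ℕ, ∀ q b : ℕ, N = q * p + b →
      (b ≤ a + 1 → (X 0 : MvPolynomial (Fin 2) k) ^ b * extv l v (N : ℤ)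
        = cf k a l (b : ℤ) * (X 1) ^ b * extv l v ((q * p : ℕ) : ℤ))
      ∧ (a < b → b < p → extv l v (N : ℤ) = 0) := by
  have hlz : (l : ℤ) = (r : ℤ) * p + a := by push_cast [hl]; ring
  have hXne : (X 0 : MvPolynomial (Fin 2) k) ≠ 0 := X_ne_zero 0
  intro N
  induction N using Nat.strong_induction_on with
  | _ N IH =>
  intro q b hN
  rcases Nat.eq_zero_or_pos b with hb0 | hb0
  · -- b = 0 : trivial
    subst hb0
    constructor
    · intro _
      rw [cf_nat k a l (Nat.zero_le a)]
      subst hN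
      norm_num
    · intro h1 _; omega
  · obtain ⟨b₀, rfl⟩ : ∃ b₀, b = b₀ + 1 := ⟨b - 1, by omega⟩
    -- the row equation at n = N - 1
    have hrow := hv ((N : ℤ) - 1)
    rw [show (N : ℤ) - 1 + 1 = (N : ℤ) from by ring,
      show (N : ℤ) - 1 - 1 = (N : ℤ) - 2 from by ring] at hrow
    -- useful facts
    have hq1 : (p : ℤ) ∣ ((N : ℤ) - 1 - (b₀ : ℤ)) := by
      refine ⟨q, ?_⟩
      push_cast [hN]
      ring
    rcases Nat.lt_or_ge b₀ (a + 1) with hba | hba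
    · -- case 1 ≤ b = b₀ + 1 ≤ a + 1 : establish the first conjunct
      have hkey := keyR (k := k) hp hl (by omega : b₀ ≤ a) hq1
      rw [show (N : ℤ) - 1 + 1 = (N : ℤ) from by ring] at hkey
      -- h1 from IH at N - 1
      have h1 : (X 0 : MvPolynomial (Fin 2) k) ^ b₀ * extv l v ((N : ℤ) - 1)
          = cf k a l (b₀ : ℤ) * (X 1) ^ b₀ * extv l v ((q * p : ℕ) : ℤ) := by
        have := ((IH (N - 1) (by omega) q b₀ (by omega)).1 (by omega))
        rw [show (((N - 1 : ℕ)) : ℤ) = (N : ℤ) - 1 from by omega] at this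
        exact this
      -- h2 : the (N - 2) term
      have h2 : (X 0 : MvPolynomial (Fin 2) k) ^ b₀ * extv l v ((N : ℤ) - 2)
          = cf k a l ((b₀ : ℤ) - 1) * X 0 * (X 1) ^ (b₀ - 1) * extv l v ((q * p : ℕ) : ℤ) := by
        rcases Nat.eq_zero_or_pos b₀ with hb₀ | hb₀
        · subst hb₀
          rw [cf_zero k a l (by norm_num : ((0:ℕ) : ℤ) - 1 < 0 ∨ _)]
          have hz : extv l v ((N : ℤ) - 2) = 0 := by
            rcases Nat.eq_zero_or_pos q with hq0 | hq0
            · subst hq0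
              apply extv_zero
              left
              simp at hN
              omega
            · obtain ⟨q', rfl⟩ : ∃ q', q = q' + 1 := ⟨q - 1, by omega⟩
              have hdecomp : N - 2 = q' * p + (p - 1) := by
                have : (q' + 1) * p = q' * p + p := by ring
                omega
              have := (IH (N - 2) (by omega) q' (p - 1) hdecomp).2 (by omega) (by omega)
              rw [show (((N - 2 : ℕ)) : ℤ) = (N : ℤ) - 2 from by omega] at this
              exact this
          rw [hz]
          ring
        · obtain ⟨b₁, rfl⟩ : ∃ b₁, b₀ = b₁ + 1 := ⟨b₀ - 1, by omega⟩
          have := ((IH (N - 2) (by omega) q b₁ (by omega)).1 (by omega))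
          rw [show (((N - 2 : ℕ)) : ℤ) = (N : ℤ) - 2 from by omega] at this
          rw [show ((b₁ + 1 : ℕ) : ℤ) - 1 = (b₁ : ℤ) from by push_cast; ring,
            show b₁ + 1 - 1 = b₁ from by omega]
          calc (X 0 : MvPolynomial (Fin 2) k) ^ (b₁ + 1) * extv l v ((N : ℤ) - 2)
              = X 0 * ((X 0) ^ b₁ * extv l v ((N : ℤ) - 2)) := by ring
            _ = X 0 * (cf k a l (b₁ : ℤ) * (X 1) ^ b₁ * extv l v ((q * p : ℕ) : ℤ)) := by
                rw [this]
            _ = cf k a l (b₁ : ℤ) * X 0 * (X 1) ^ b₁ * extv l v ((q * p : ℕ) : ℤ) := by ring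
      -- now cancel
      have hNne : (((N : ℤ)) : MvPolynomial (Fin 2) k) ≠ 0 :=
        cast_ne (p := p) (not_dvd_aux hN (by omega) (by omega))
      have hfirst : (X 0 : MvPolynomial (Fin 2) k) ^ (b₀ + 1) * extv l v (N : ℤ)
          = cf k a l ((b₀ : ℤ) + 1) * (X 1) ^ (b₀ + 1) * extv l v ((q * p : ℕ) : ℤ) := by
        apply mul_left_cancel₀ hNne
        apply mul_left_cancel₀ hXne
        rcases Nat.eq_zero_or_pos b₀ with hb₀ | hb₀
        · subst hb₀
          rw [cf_zero k a l (by norm_num : ((0:ℕ) : ℤ) - 1 < 0 ∨ _)] at h2 hkey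
          linear_combination (X 0 : MvPolynomial (Fin 2) k) ^ (0:ℕ) * hrow
            - ((((N : ℤ) - 1 - l - 1 : ℤ) : MvPolynomial (Fin 2) k) * X 1 ^ 2) * h2
            - ((((l : ℤ) - 2 * ((N : ℤ) - 1) : ℤ) : MvPolynomial (Fin 2) k) * (X 0 * X 1)) * h1
            - (X 0 * X 1 ^ (0 + 1) * extv l v ((q * p : ℕ) : ℤ)) * hkey
        · obtain ⟨b₁, rfl⟩ : ∃ b₁, b₀ = b₁ + 1 := ⟨b₀ - 1, by omega⟩
          rw [show b₁ + 1 - 1 = b₁ from by omega] at h2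
          linear_combination (X 0 : MvPolynomial (Fin 2) k) ^ (b₁ + 1) * hrow
            - ((((N : ℤ) - 1 - l - 1 : ℤ) : MvPolynomial (Fin 2) k) * X 1 ^ 2) * h2
            - ((((l : ℤ) - 2 * ((N : ℤ) - 1) : ℤ) : MvPolynomial (Fin 2) k) * (X 0 * X 1)) * h1
            - (X 0 * X 1 ^ (b₁ + 2) * extv l v ((q * p : ℕ) : ℤ)) * hkey
      constructor
      · intro _
        rw [show ((b₀ + 1 : ℕ) : ℤ) = (b₀ : ℤ) + 1 from by push_cast; ring]
        exact hfirst
      · intro hab _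
        -- here b₀ + 1 = a + 1
        rw [cf_zero k a l (by push_cast; omega : ((b₀ : ℤ) + 1) < 0 ∨ (a : ℤ) < (b₀ : ℤ) + 1)] at hfirst
        simp only [zero_mul] at hfirst
        rcases mul_eq_zero.mp hfirst with h | h
        · exact absurd h (pow_ne_zero _ hXne)
        · exact h
    · -- case b₀ ≥ a + 1 : the gap, second conjunct
      constructor
      · intro hle; omega
      · intro _ hbp
        -- w(N-1) = 0 by IH
        have hw1 : extv l v ((N : ℤ) - 1) = 0 := by
          have := (IH (N - 1) (by omega) q b₀ (by omega)).2 (by omega) (by omega)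
          rw [show (((N - 1 : ℕ)) : ℤ) = (N : ℤ) - 1 from by omega] at this
          exact this
        -- the first term of the row is zero
        have hterm1 : ((((N : ℤ) - 1) - l - 1 : ℤ) : MvPolynomial (Fin 2) k)
            * X 1 ^ 2 * extv l v ((N : ℤ) - 2) = 0 := by
          rcases Nat.lt_or_ge (a + 1) b₀ with hb2 | hb2
          · -- b₀ ≥ a + 2 : w (N - 2) = 0
            have := (IH (N - 2) (by omega) q (b₀ - 1) (by omega)).2 (by omega) (by omega)
            rw [show (((N - 2 : ℕ)) : ℤ) = (N : ℤ) - 2 from by omega] at this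
            rw [this]
            ring
          · -- b₀ = a + 1 : the coefficient is divisible by p
            have hb₀ : b₀ = a + 1 := by omega
            have hz : ((((N : ℤ) - 1) - l - 1 : ℤ) : MvPolynomial (Fin 2) k) = 0 := by
              apply castp (p := p)
              refine ⟨(q : ℤ) - r, ?_⟩
              have : (N : ℤ) = (q : ℤ) * p + b₀ + 1 := by push_cast [hN]; ring
              rw [this, hlz, hb₀]
              push_cast
              ring
            rw [hz]
            ring
        have hNne : (((N : ℤ)) : MvPolynomial (Fin 2) k) ≠ 0 :=
          cast_ne (p := p) (not_dvd_aux hN (by omega) (by omega))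
        have hXXne : (X 0 : MvPolynomial (Fin 2) k) ^ 2 ≠ 0 := pow_ne_zero _ hXne
        have hfin : (((N : ℤ)) : MvPolynomial (Fin 2) k) * (X 0 ^ 2 * extv l v (N : ℤ)) = 0 := by
          linear_combination hrow - hterm1
            - ((((l : ℤ) - 2 * ((N : ℤ) - 1) : ℤ) : MvPolynomial (Fin 2) k) * (X 0 * X 1)) * hw1
        rcases mul_eq_zero.mp hfin with h | h
        · exact absurd h hNne
        · rcases mul_eq_zero.mp h with h' | h'
          · exact absurd h' hXXne
          · exact h'

end Struct

section Span

variable {k : Type*} [Field k] {p r a l : ℕ}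

lemma prime_X0 : Prime (X (0 : Fin 2) : MvPolynomial (Fin 2) k) := by
  have h := (MulEquiv.prime_iff (MvPolynomial.finSuccEquiv k 1).toMulEquiv
    (p := (X 0 : MvPolynomial (Fin 2) k))).symm
  rw [h]
  convert (Polynomial.prime_X : Prime (Polynomial.X (R := MvPolynomial (Fin 1) k)))
  simpa using MvPolynomial.finSuccEquiv_X_zero (R := k) (n := 1)

lemma X0_not_dvd_X1_pow (m : ℕ) : ¬ (X (0 : Fin 2) : MvPolynomial (Fin 2) k) ∣ (X 1) ^ m := by
  intro h
  have h1 : (X (0 : Fin 2) : MvPolynomial (Fin 2) k) ∣ X 1 := prime_X0.dvd_of_dvd_pow h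
  obtain ⟨c, hc⟩ := h1
  have h10 := congrArg (MvPolynomial.eval ![(0 : k), 1]) hc
  simp at h10

lemma window_aux {pp q1 q2 b aa : ℕ} (hb : b < pp) (ha : aa < pp)
    (h1 : q2 * pp ≤ q1 * pp + b) (h2 : q1 * pp + b ≤ q2 * pp + aa) : q2 = q1 ∧ b ≤ aa := by
  have key : ∀ x y : ℕ, x < y → x * pp + pp ≤ y * pp := by
    intro x y hxy
    calc x * pp + pp = (x + 1) * pp := by ring
      _ ≤ y * pp := Nat.mul_le_mul_right pp hxy
  rcases lt_trichotomy q2 q1 with h | h | h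
  · have := key q2 q1 h; omega
  · subst h; exact ⟨rfl, by omega⟩
  · have := key q1 q2 h; omega

lemma choose_zmod_ne (hp : p.Prime) (ha1 : a + 1 < p) (hl : l = r * p + a) :
    ∀ j, j ≤ a → ((l.choose j : ℕ) : ZMod p) ≠ 0 := by
  haveI : Fact p.Prime := ⟨hp⟩
  intro j
  induction j with
  | zero =>
    intro _
    simp only [Nat.choose_zero_right, Nat.cast_one]
    exact one_ne_zero
  | succ j IHj =>
    intro hj
    have hIH := IHj (by omega)
    have hcho := Nat.choose_succ_right_eq l j
    have hlj : l - j = r * p + (a - j) := by omega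
    have hcast : ((l.choose (j+1) * (j+1) : ℕ) : ZMod p) = ((l.choose j * (l - j) : ℕ) : ZMod p) := by
      rw [hcho]
    rw [hlj] at hcast
    push_cast [ZMod.natCast_self] at hcast
    rw [show ((r : ZMod p) * 0 + (↑(a - j) : ZMod p)) = (↑(a - j) : ZMod p) from by ring] at hcast
    have haj : ((a - j : ℕ) : ZMod p) ≠ 0 := by
      rw [Ne, ZMod.natCast_eq_zero_iff]
      intro hdvd
      have := Nat.le_of_dvd (by omega) hdvd
      omega
    have hj1 : ((j + 1 : ℕ) : ZMod p) ≠ 0 := by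
      rw [Ne, ZMod.natCast_eq_zero_iff]
      intro hdvd
      have := Nat.le_of_dvd (by omega) hdvd
      omega
    intro h0
    rw [h0] at hcast
    simp only [zero_mul] at hcast
    push_cast at hcast
    exact (mul_ne_zero hIH haj) (by linear_combination -hcast)

lemma cf_a_unit (hp : p.Prime) [CharP k p] (ha1 : a + 1 < p) (hl : l = r * p + a) :
    ∃ d : MvPolynomial (Fin 2) k, cf k a l (a : ℤ) * d = 1 := by
  haveI : Fact p.Prime := ⟨hp⟩
  have hz := choose_zmod_ne hp ha1 hl a le_rfl
  have hk : ((l.choose a : ℕ) : k) ≠ 0 := by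
    intro h0
    rw [CharP.cast_eq_zero_iff k p] at h0
    apply hz
    rw [ZMod.natCast_eq_zero_iff]
    exact h0
  have hc : ((-1 : k) ^ a * (l.choose a : ℕ) : k) ≠ 0 := by
    apply mul_ne_zero _ hk
    exact pow_ne_zero _ (by norm_num)
  refine ⟨C (((-1 : k) ^ a * (l.choose a : ℕ) : k)⁻¹), ?_⟩
  rw [cf_nat k a l le_rfl,
    show ((-1 : MvPolynomial (Fin 2) k)) = C (-1 : k) from by simp,
    show (((l.choose a : ℕ)) : MvPolynomial (Fin 2) k) = C ((l.choose a : ℕ) : k) from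
      (map_natCast C _).symm,
    ← map_pow, ← map_mul, ← map_mul, mul_inv_cancel₀ hc, map_one]

lemma span_ker (hp : p.Prime) [CharP k p] (ha1 : a + 1 < p) (hl : l = r * p + a)
    (v : Fin (l + 1) → MvPolynomial (Fin 2) k)
    (hv : v ∈ LinearMap.ker (Cmat k l).mulVecLin) :
    ∃ g : Fin (r + 1) → MvPolynomial (Fin 2) k,
      ∀ i : Fin (l + 1), v i = ∑ q : Fin (r + 1), g q * Hvec k p a l (q : ℕ) i := by
  have hppos : 0 < p := hp.pos
  have hS := structure_lem hp ha1 hl v ((mem_ker_iff v).mp hv)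
  have hXne : (X 0 : MvPolynomial (Fin 2) k) ≠ 0 := X_ne_zero 0
  obtain ⟨d, hd⟩ := cf_a_unit (k := k) hp ha1 hl
  have hall : ∀ q : Fin (r + 1), ∃ u, extv l v (((q : ℕ) * p : ℕ) : ℤ) = X 0 ^ a * u := by
    intro q
    have hqr : (q : ℕ) ≤ r := by omega
    have h := (hS ((q : ℕ) * p + a) q a rfl).1 (by omega)
    have hdvd : (X 0 : MvPolynomial (Fin 2) k) ^ a
        ∣ X 1 ^ a * extv l v (((q : ℕ) * p : ℕ) : ℤ) := by
      refine ⟨d * extv l v ((((q : ℕ) * p + a : ℕ)) : ℤ), ?_⟩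
      rw [show ((a : ℕ) : ℤ) = (a : ℤ) from rfl] at h
      linear_combination (-d) * h - (X 1 ^ a * extv l v (((q : ℕ) * p : ℕ) : ℤ)) * hd
    have := prime_X0.pow_dvd_of_dvd_mul_left a (X0_not_dvd_X1_pow a) hdvd
    exact this
  choose g hg using hall
  refine ⟨g, ?_⟩
  intro i
  have hdecomp : (i : ℕ) = ((i : ℕ) / p) * p + (i : ℕ) % p := by
    rw [mul_comm]
    exact (Nat.div_add_mod _ p).symm
  set q' : ℕ := (i : ℕ) / p with hq'
  set b : ℕ := (i : ℕ) % p with hb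
  have hbp : b < p := Nat.mod_lt _ hppos
  have hil : (i : ℕ) ≤ l := by have := i.2; omega
  rcases Nat.lt_or_ge a b with hab | hab
  · -- gap : both sides vanish
    have hvz : extv l v ((i : ℕ) : ℤ) = 0 := (hS (i : ℕ) q' b hdecomp).2 hab hbp
    rw [← extv_coe v i, hvz]
    symm
    apply Finset.sum_eq_zero
    intro q'' _
    rw [Hvec, if_neg]
    · ring
    · intro hcond
      have := window_aux hbp (by omega) (by omega : (q'' : ℕ) * p ≤ q' * p + b)
        (by omega : q' * p + b ≤ (q'' : ℕ) * p + a)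
      omega
  · -- window
    have hq'r : q' ≤ r := by
      by_contra hcon
      have : (r + 1) * p ≤ q' * p := Nat.mul_le_mul_right p (by omega)
      have h2 : q' * p ≤ (i : ℕ) := by omega
      have h3 : (r + 1) * p = r * p + p := by ring
      omega
    have hfq' : q' < r + 1 := by omega
    have h := (hS (i : ℕ) q' b hdecomp).1 (by omega)
    rw [show (((q' * p : ℕ)) : ℤ) = ((((⟨q', hfq'⟩ : Fin (r + 1)) : ℕ) * p : ℕ) : ℤ) from rfl,
      hg ⟨q', hfq'⟩] at h
    rw [show ((i : ℕ) : ℤ) = (((i : ℕ) : ℕ) : ℤ) from rfl, extv_coe v i] at h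
    obtain ⟨c, hc⟩ : ∃ c, a = b + c := ⟨a - b, by omega⟩
    have hvi : v i = cf k a l (b : ℤ) * X 0 ^ c * X 1 ^ b * g ⟨q', hfq'⟩ := by
      apply mul_left_cancel₀ (pow_ne_zero b hXne)
      rw [h, hc]
      ring
    rw [hvi]
    rw [Finset.sum_eq_single (⟨q', hfq'⟩ : Fin (r + 1))]
    · rw [Hvec, if_pos]
      · rw [show (i : ℕ) - ((⟨q', hfq'⟩ : Fin (r + 1)) : ℕ) * p = b from by
            simp only []; omega]
        rw [cf_nat k a l (by omega), show a - b = c from by omega]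
        ring
      · constructor
        · simp only []; omega
        · simp only []; omega
    · intro q'' _ hne
      rw [Hvec, if_neg]
      · ring
      · intro hcond
        have := window_aux hbp (by omega) (by omega : (q'' : ℕ) * p ≤ q' * p + b)
          (by omega : q' * p + b ≤ (q'' : ℕ) * p + a)
        apply hne
        ext
        simp only []
        omega
    · intro hnotmem
      exact absurd (Finset.mem_univ _) hnotmem

end Span

section Homog

variable {k : Type*} [Field k]

lemma Hvec_homog (p a l q : ℕ) (i : Fin (l + 1)) :
    MvPolynomial.IsHomogeneous (Hvec k p a l q i) a := by
  rw [Hvec]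
  split
  · next hcond =>
    set b : ℕ := (i : ℕ) - q * p with hb
    have hba : b ≤ a := by omega
    have h1 : MvPolynomial.IsHomogeneous ((-1 : MvPolynomial (Fin 2) k) ^ b) 0 := by
      have : ((-1 : MvPolynomial (Fin 2) k)) = C (-1 : k) := by simp
      rw [this, ← map_pow]
      exact isHomogeneous_C _ _
    have h2 : MvPolynomial.IsHomogeneous
        (((l.choose b : ℕ) : MvPolynomial (Fin 2) k)) 0 := by
      rw [show (((l.choose b : ℕ)) : MvPolynomial (Fin 2) k) = C ((l.choose b : ℕ) : k) from
        (map_natCast C _).symm]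
      exact isHomogeneous_C _ _
    have h3 : MvPolynomial.IsHomogeneous ((X 0 : MvPolynomial (Fin 2) k) ^ (a - b)) (a - b) := by
      simpa using (isHomogeneous_X k (0 : Fin 2)).pow (a - b)
    have h4 : MvPolynomial.IsHomogeneous ((X 1 : MvPolynomial (Fin 2) k) ^ b) b := by
      simpa using (isHomogeneous_X k (1 : Fin 2)).pow b
    have := ((h1.mul h2).mul h3).mul h4
    rw [show 0 + 0 + (a - b) + b = a from by omega] at this
    exact this
  · exact isHomogeneous_zero _ _ _

end Homog

/-- For `λ = rp + a`, `0 ≤ a < p`, `p ∤ λ + 1`, the kernel of `C(λ)` is a free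
`k[s,t]`-module of rank `r + 1` with basis `H_0, …, H_r`, all homogeneous of degree `a`. -/
theorem ker_Cmat_basis {k : Type*} [Field k] {p r a l : ℕ} (hp : p.Prime)
    (hchar : CharP k p) (ha : a < p) (hl : l = r * p + a) (hl1 : ¬ p ∣ (l + 1)) :
    (∀ q : Fin (r + 1), ∀ i : Fin (l + 1),
      MvPolynomial.IsHomogeneous (Hvec k p a l (q : ℕ) i) a) ∧
    ∃ b : Module.Basis (Fin (r + 1)) (MvPolynomial (Fin 2) k)
        ↥(LinearMap.ker (Cmat k l).mulVecLin),
      ∀ q : Fin (r + 1),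
        ((b q : Fin (l + 1) → MvPolynomial (Fin 2) k)) = Hvec k p a l (q : ℕ) := by
  have ha1 : a + 1 < p := by
    rcases Nat.lt_or_ge (a + 1) p with h | h
    · exact h
    · exfalso
      apply hl1
      have hap : a + 1 = p := by omega
      exact ⟨r + 1, by rw [hl, ← hap]; ring⟩
  constructor
  · intro q i
    exact Hvec_homog p a l (q : ℕ) i
  · -- construct the basis
    set R := MvPolynomial (Fin 2) k with hR
    have hXne : (X 0 : R) ≠ 0 := X_ne_zero 0
    set fam : Fin (r + 1) → ↥(LinearMap.ker (Cmat k l).mulVecLin) :=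
      fun q => ⟨Hvec k p a l (q : ℕ), Hvec_mem_ker hp ha1 hl (by omega)⟩ with hfam
    have hli : LinearIndependent R fam := by
      apply LinearIndependent.of_comp (Submodule.subtype _)
      rw [Fintype.linearIndependent_iff]
      intro g hsum q
      have hqp : (q : ℕ) * p < l + 1 := by
        have : (q : ℕ) * p ≤ r * p := Nat.mul_le_mul_right p (by omega)
        omega
      have hev := congrFun hsum ⟨(q : ℕ) * p, hqp⟩
      rw [Finset.sum_apply] at hev
      simp only [Pi.smul_apply, smul_eq_mul, Function.comp_apply, Submodule.coe_subtype,
        Pi.zero_apply, hfam] at hev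
      rw [Finset.sum_eq_single q] at hev
      · rw [Hvec, if_pos (⟨le_refl _, Nat.le_add_right _ _⟩ :
            (q : ℕ) * p ≤ ((⟨(q : ℕ) * p, hqp⟩ : Fin (l + 1)) : ℕ)
            ∧ ((⟨(q : ℕ) * p, hqp⟩ : Fin (l + 1)) : ℕ) ≤ (q : ℕ) * p + a)] at hev
        simp only [Fin.val_mk] at hev
        rw [Nat.sub_self] at hev
        simp only [pow_zero, Nat.choose_zero_right, Nat.cast_one, one_mul, mul_one,
          Nat.sub_zero] at hev
        have := mul_eq_zero.mp hev
        rcases this with h | h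
        · exact h
        · exact absurd h (pow_ne_zero _ hXne)
      · intro q'' _ hne
        rw [Hvec, if_neg]
        · ring
        · intro hcond
          simp only [Fin.val_mk] at hcond
          have := window_aux (show (0 : ℕ) < p from hp.pos) (by omega)
            (by omega : (q'' : ℕ) * p ≤ (q : ℕ) * p + 0)
            (by omega : (q : ℕ) * p + 0 ≤ (q'' : ℕ) * p + a)
          apply hne
          ext
          omega
      · intro hnm
        exact absurd (Finset.mem_univ _) hnm
    have hsp : ⊤ ≤ Submodule.span R (Set.range fam) := by
      rintro ⟨v, hvmem⟩ -
      obtain ⟨g, hg⟩ := span_ker hp ha1 hl v hvmem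
      have hxe : (⟨v, hvmem⟩ : ↥(LinearMap.ker (Cmat k l).mulVecLin))
          = ∑ q : Fin (r + 1), g q • fam q := by
        apply Subtype.ext
        simp only [Submodule.coe_sum, SetLike.val_smul]
        funext i
        rw [Finset.sum_apply]
        simp only [Pi.smul_apply, smul_eq_mul]
        exact hg i
      rw [hxe]
      exact Submodule.sum_mem _ fun q _ =>
        Submodule.smul_mem _ _ (Submodule.subset_span ⟨q, rfl⟩)
    refine ⟨Module.Basis.mk hli hsp, ?_⟩
    intro q
    rw [Module.Basis.mk_apply]
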